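/- Let G be a graph, s and t two distinct vertices, k ≥ 2 and ℓ ≥ 0 integers, and v a vertex of G with deg_G(v) ≥ ℓ + 2. If G contains an st-path with at most k vertices that contains v, then G contains an st-path P with |V(P)| ≤ k and |N_G(V(P))| ≥ ℓ. -/

import Mathlib

open SimpleGraph

/-- The open neighborhood of a vertex set `S`: vertices outside `S` adjacent to some
vertex of `S`. -/
def openNbhd {V : Type*} (G : SimpleGraph V) (S : Set V) : Set V :=
  {v | v ∉ S ∧ ∃ w ∈ S, G.Adj v w}

/-- If `v` has degree at least `ℓ + 2` and `G` contains an `st`-path with at most `k`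
vertices containing `v`, then `G` contains an `st`-path `P` with `|V(P)| ≤ k` and
`|N_G(V(P))| ≥ ℓ`. -/
theorem stmt_15 {V : Type*} [Fintype V] (G : SimpleGraph V) (s t v : V) (hst : s ≠ t)
    (k ℓ : ℕ) (hk : 2 ≤ k) (hv : ℓ + 2 ≤ (G.neighborSet v).ncard)
    (hex : ∃ q : G.Walk s t, q.IsPath ∧ q.support.length ≤ k ∧ v ∈ q.support) :
    ∃ p : G.Walk s t, p.IsPath ∧ p.support.length ≤ k ∧
      ℓ ≤ (openNbhd G {x | x ∈ p.support}).ncard := by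
  classical
  obtain ⟨q0, hq0p, hq0len, hq0v⟩ := hex
  set S : Set ℕ := {n | ∃ p : G.Walk s t, p.IsPath ∧ v ∈ p.support ∧ p.length = n} with hS
  have hSne : S.Nonempty := ⟨q0.length, q0, hq0p, hq0v, rfl⟩
  obtain ⟨p, hp, hvp, hplen⟩ := Nat.sInf_mem hSne
  have hmin : ∀ q : G.Walk s t, q.IsPath → v ∈ q.support → p.length ≤ q.length := by
    intro q hq hvq
    rw [hplen]
    exact Nat.sInf_le ⟨q, hq, hvq, rfl⟩
  have hlenk : p.support.length ≤ k := by
    have h1 := hmin q0 hq0p hq0v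
    rw [Walk.length_support] at hq0len ⊢
    omega
  refine ⟨p, hp, hlenk, ?_⟩
  set p1 := p.takeUntil v hvp with hp1def
  set p2 := p.dropUntil v hvp with hp2def
  have hspec : p1.append p2 = p := Walk.take_spec p hvp
  have hsupp : p.support = p1.support ++ p2.support.tail := by
    rw [← hspec, Walk.support_append]
  have hnodup : (p1.support ++ p2.support.tail).Nodup := by
    rw [← hsupp]; exact hp.support_nodup
  have hdisj : p1.support.Disjoint p2.support.tail := (List.nodup_append'.mp hnodup).2.2
  have hp1path : p1.IsPath := hp.takeUntil hvp
  have hp2path : p2.IsPath := hp.dropUntil hvp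
  have hlen12 : p1.length + p2.length = p.length := by
    rw [← hspec, Walk.length_append]
  -- Claim 1: any neighbor of v lying on p1 is the penultimate vertex of p1.
  have claim1 : ∀ w (hw : w ∈ p1.support), G.Adj v w → w = p1.getVert (p1.length - 1) := by
    intro w hw hadj
    have hwv : w ≠ v := hadj.ne'
    set r := p1.takeUntil w hw with hrdef
    set d := p1.dropUntil w hw with hddef
    have hspec1 : r.append d = p1 := Walk.take_spec p1 hw
    have hrd : r.length + d.length = p1.length := by
      rw [← hspec1, Walk.length_append]
    have hdpos : 1 ≤ d.length := by
      rcases Nat.eq_zero_or_pos d.length with h0 | h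
      · exact absurd (Walk.eq_of_length_eq_zero h0) hwv
      · exact h
    have hnd1 : (r.support ++ d.support.tail).Nodup := by
      rw [← Walk.support_append, hspec1]; exact hp1path.support_nodup
    have hvr : v ∉ r.support := by
      intro hvr
      have hvd : v ∈ d.support.tail := by
        have hvd0 : v ∈ d.support := d.end_mem_support
        rw [d.support_eq_cons] at hvd0
        rcases List.mem_cons.mp hvd0 with h | h
        · exact absurd h.symm hwv
        · exact h
      exact (List.nodup_append'.mp hnd1).2.2 hvr hvd
    let q' : G.Walk s t := r.append (Walk.cons hadj.symm p2)
    have hq'supp : q'.support = r.support ++ p2.support := by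
      show (r.append (Walk.cons hadj.symm p2)).support = _
      rw [Walk.support_append, Walk.support_cons, List.tail_cons]
    have hq'path : q'.IsPath := by
      rw [Walk.isPath_def, hq'supp, List.nodup_append']
      refine ⟨(hp1path.takeUntil hw).support_nodup, hp2path.support_nodup, ?_⟩
      intro x hxr hxp2
      have hxv : x = v := by
        by_contra hxv
        have hxt : x ∈ p2.support.tail := by
          rw [p2.support_eq_cons] at hxp2
          rcases List.mem_cons.mp hxp2 with h | h
          · exact absurd h hxv
          · exact h
        exact hdisj (Walk.support_takeUntil_subset p1 hw hxr) hxt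
      exact hvr (hxv ▸ hxr)
    have hvq' : v ∈ q'.support := by
      show v ∈ (r.append (Walk.cons hadj.symm p2)).support
      rw [Walk.mem_support_append_iff]
      right
      rw [Walk.support_cons]
      exact List.mem_cons_of_mem _ p2.start_mem_support
    have hle := hmin q' hq'path hvq'
    have hq'len : q'.length = r.length + (p2.length + 1) := by
      show (r.append (Walk.cons hadj.symm p2)).length = _
      rw [Walk.length_append, Walk.length_cons]
    have hreq : p1.length - 1 = r.length := by omega
    have hgv : p1.getVert r.length = w := by
      rw [← hspec1, Walk.getVert_append, if_neg (lt_irrefl _), Nat.sub_self, Walk.getVert_zero]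
    rw [hreq]; exact hgv.symm
  -- Claim 2: any neighbor of v lying on p2 is the second vertex of p2.
  have claim2 : ∀ w (hw : w ∈ p2.support), G.Adj v w → w = p2.getVert 1 := by
    intro w hw hadj
    have hwv : v ≠ w := hadj.ne
    set r := p2.takeUntil w hw with hrdef
    set d := p2.dropUntil w hw with hddef
    have hspec2 : r.append d = p2 := Walk.take_spec p2 hw
    have hrd : r.length + d.length = p2.length := by
      rw [← hspec2, Walk.length_append]
    have hrpos : 1 ≤ r.length := by
      rcases Nat.eq_zero_or_pos r.length with h0 | h
      · exact absurd (Walk.eq_of_length_eq_zero h0) hwv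
      · exact h
    have hnd2 : (r.support ++ d.support.tail).Nodup := by
      rw [← Walk.support_append, hspec2]; exact hp2path.support_nodup
    have hvd : v ∉ d.support := by
      intro hvd
      rw [d.support_eq_cons] at hvd
      rcases List.mem_cons.mp hvd with h | h
      · exact hwv h
      · exact (List.nodup_append'.mp hnd2).2.2 r.start_mem_support h
    let q' : G.Walk s t := p1.append (Walk.cons hadj d)
    have hq'supp : q'.support = p1.support ++ d.support := by
      show (p1.append (Walk.cons hadj d)).support = _
      rw [Walk.support_append, Walk.support_cons, List.tail_cons]
    have hq'path : q'.IsPath := by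
      rw [Walk.isPath_def, hq'supp, List.nodup_append']
      refine ⟨hp1path.support_nodup, (hp2path.dropUntil hw).support_nodup, ?_⟩
      intro x hx1 hxd
      have hxp2 : x ∈ p2.support := Walk.support_dropUntil_subset p2 hw hxd
      have hxv : x = v := by
        by_contra hxv
        have hxt : x ∈ p2.support.tail := by
          rw [p2.support_eq_cons] at hxp2
          rcases List.mem_cons.mp hxp2 with h | h
          · exact absurd h hxv
          · exact h
        exact hdisj hx1 hxt
      exact hvd (hxv ▸ hxd)
    have hvq' : v ∈ q'.support := by
      show v ∈ (p1.append (Walk.cons hadj d)).support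
      rw [Walk.mem_support_append_iff]
      left
      exact p1.end_mem_support
    have hle := hmin q' hq'path hvq'
    have hq'len : q'.length = p1.length + (d.length + 1) := by
      show (p1.append (Walk.cons hadj d)).length = _
      rw [Walk.length_append, Walk.length_cons]
    have hreq : r.length = 1 := by omega
    have hgv : p2.getVert 1 = w := by
      rw [← hspec2, Walk.getVert_append, if_neg (by omega), hreq, Nat.sub_self,
        Walk.getVert_zero]
    exact hgv.symm
  -- Finish: neighbors of v on p are among two vertices.
  set A : Set V := {x | x ∈ p.support} with hA
  have hsub : G.neighborSet v ∩ A ⊆ {p1.getVert (p1.length - 1), p2.getVert 1} := by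
    rintro x ⟨hadj, hxA⟩
    have hadj' : G.Adj v x := hadj
    have hx : x ∈ p.support := hxA
    rw [hsupp, List.mem_append] at hx
    rcases hx with h | h
    · exact Or.inl (claim1 x h hadj')
    · exact Or.inr (claim2 x (List.mem_of_mem_tail h) hadj')
  have h2 : (G.neighborSet v ∩ A).ncard ≤ 2 := by
    refine le_trans (Set.ncard_le_ncard hsub (Set.toFinite _)) ?_
    refine le_trans (Set.ncard_insert_le _ _) ?_
    simp [Set.ncard_singleton]
  have hdiffsub : G.neighborSet v \ A ⊆ openNbhd G A := by
    rintro x ⟨hadj, hxA⟩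
    exact ⟨hxA, v, hvp, (G.adj_symm hadj)⟩
  have hsplit := Set.ncard_inter_add_ncard_diff_eq_ncard (G.neighborSet v) A (Set.toFinite _)
  have hstep : ℓ ≤ (G.neighborSet v \ A).ncard := by omega
  exact hstep.trans (Set.ncard_le_ncard hdiffsub (Set.toFinite _))
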